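/- Let G be a graph on n vertices and let cl_k(G) denote its k-closure. Then G contains no linear forest with k edges if and only if cl_k(G) contains no linear forest with k edges. -/

import Mathlib

/-- A linear forest is a graph all of whose connected components are paths or
isolated vertices; equivalently, an acyclic graph of maximum degree at most 2. -/
def IsLinearForest {V : Type*} (F : SimpleGraph V) : Prop :=
  F.IsAcyclic ∧ ∀ v : V, (F.neighborSet v).ncard ≤ 2

namespace LFAux

open SimpleGraph Set

variable {V : Type*} [Fintype V] [DecidableEq V]

omit [DecidableEq V] in
lemma lf_mono {F F' : SimpleGraph V} (h : F ≤ F') (hF' : IsLinearForest F') :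
    IsLinearForest F := by
  constructor
  · intro v c hc
    exact hF'.1 (c.transfer F' fun e he => edgeSet_mono h (c.edges_subset_edgeSet he))
      (hc.transfer _)
  · intro x
    exact le_trans (Set.ncard_le_ncard (fun y hy => h hy) (Set.toFinite _)) (hF'.2 x)

omit [Fintype V] [DecidableEq V] in
lemma sup_edge_comm (F : SimpleGraph V) (x y : V) :
    F ⊔ SimpleGraph.fromEdgeSet {s(x, y)} = F ⊔ SimpleGraph.fromEdgeSet {s(y, x)} := by
  rw [Sym2.eq_swap]

omit [Fintype V] [DecidableEq V] in
lemma nbr_sup_edge_left (F : SimpleGraph V) {x y : V} (hxy : x ≠ y) :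
    (F ⊔ SimpleGraph.fromEdgeSet {s(x, y)}).neighborSet x = insert y (F.neighborSet x) := by
  ext w
  simp only [mem_neighborSet, sup_adj, fromEdgeSet_adj, Set.mem_singleton_iff, Set.mem_insert_iff,
    Sym2.eq_iff]
  constructor
  · rintro (h | ⟨⟨-, rfl⟩ | ⟨rfl, rfl⟩, hne⟩)
    · exact Or.inr h
    · exact Or.inl rfl
    · exact absurd rfl hne
  · rintro (rfl | h)
    · exact Or.inr ⟨Or.inl ⟨trivial, rfl⟩, hxy⟩
    · exact Or.inl h

omit [Fintype V] [DecidableEq V] in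
lemma nbr_sup_edge_other (F : SimpleGraph V) {x y z : V} (hzx : z ≠ x) (hzy : z ≠ y) :
    (F ⊔ SimpleGraph.fromEdgeSet {s(x, y)}).neighborSet z = F.neighborSet z := by
  ext w
  simp only [mem_neighborSet, sup_adj, fromEdgeSet_adj, Set.mem_singleton_iff, Sym2.eq_iff]
  constructor
  · rintro (h | ⟨⟨rfl, rfl⟩ | ⟨rfl, rfl⟩, hne⟩)
    · exact h
    · exact absurd rfl hzx
    · exact absurd rfl hzy
  · exact fun h => Or.inl h

omit [Fintype V] [DecidableEq V] in
lemma nbr_del_edge_left (F : SimpleGraph V) (x y : V) :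
    (F.deleteEdges {s(x, y)}).neighborSet x = F.neighborSet x \ {y} := by
  ext w
  simp only [mem_neighborSet, deleteEdges_adj, Set.mem_singleton_iff, Set.mem_diff, Sym2.eq_iff]
  constructor
  · rintro ⟨h, hne⟩
    exact ⟨h, fun hw => hne (Or.inl ⟨trivial, hw⟩)⟩
  · rintro ⟨h, hne⟩
    refine ⟨h, fun hc => ?_⟩
    rcases hc with ⟨-, rfl⟩ | ⟨rfl, rfl⟩
    · exact hne rfl
    · exact hne rfl

omit [Fintype V] [DecidableEq V] in
lemma nbr_del_edge_other (F : SimpleGraph V) {x y z : V} (hzx : z ≠ x) (hzy : z ≠ y) :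
    (F.deleteEdges {s(x, y)}).neighborSet z = F.neighborSet z := by
  ext w
  simp only [mem_neighborSet, deleteEdges_adj, Set.mem_singleton_iff, Sym2.eq_iff]
  constructor
  · exact fun h => h.1
  · intro h
    refine ⟨h, fun hc => ?_⟩
    rcases hc with ⟨rfl, rfl⟩ | ⟨rfl, rfl⟩
    · exact hzx rfl
    · exact hzy rfl

omit [Fintype V] [DecidableEq V] in
lemma del_edge_comm (F : SimpleGraph V) (x y : V) :
    F.deleteEdges {s(x, y)} = F.deleteEdges {s(y, x)} := by
  rw [Sym2.eq_swap]

omit [Fintype V] [DecidableEq V] in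
lemma edgeSet_sup_edge (F : SimpleGraph V) {x y : V} (hxy : x ≠ y) :
    (F ⊔ SimpleGraph.fromEdgeSet {s(x, y)}).edgeSet = insert s(x, y) F.edgeSet := by
  rw [edgeSet_sup, edgeSet_fromEdgeSet]
  have h2 : ({s(x, y)} : Set (Sym2 V)) \ {e | e.IsDiag} = {s(x, y)} := by
    ext e
    simp only [Set.mem_diff, Set.mem_singleton_iff, Set.mem_setOf_eq, and_iff_left_iff_imp]
    rintro rfl
    simp [hxy]
  rw [Sym2.diagSet_eq_setOfPred_isDiag, h2, Set.union_singleton]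

end LFAux

namespace Part2

open SimpleGraph Set
variable {V : Type*} [Fintype V] [DecidableEq V]
open LFAux

omit [Fintype V] [DecidableEq V] in
lemma not_adj_of_not_reachable {F : SimpleGraph V} {x y : V} (h : ¬ F.Reachable x y) :
    ¬ F.Adj x y := fun ha => h ha.reachable

omit [Fintype V] [DecidableEq V] in
lemma ne_of_not_reachable {F : SimpleGraph V} {x y : V} (h : ¬ F.Reachable x y) :
    x ≠ y := fun he => h (he ▸ Reachable.refl x)

omit [Fintype V] [DecidableEq V] in
lemma acyclic_sup_edge {F : SimpleGraph V} (hF : F.IsAcyclic) {x y : V}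
    (hr : ¬ F.Reachable x y) : (F ⊔ SimpleGraph.fromEdgeSet {s(x, y)}).IsAcyclic := by
  have hxy : x ≠ y := ne_of_not_reachable hr
  have hnadj : ¬ F.Adj x y := not_adj_of_not_reachable hr
  intro v c hc
  by_cases he : s(x, y) ∈ c.edges
  · have hdel : (F ⊔ SimpleGraph.fromEdgeSet {s(x, y)}) \ SimpleGraph.fromEdgeSet {s(x, y)} ≤ F := by
      intro a b hab
      rcases hab with ⟨hab1 | hab2, hab3⟩
      · exact hab1
      · exact absurd hab2 hab3
    have := (adj_and_reachable_delete_edges_iff_exists_cycle.mpr ⟨v, c, hc, he⟩).2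
    exact hr (this.mono hdel)
  · refine hF (c.transfer F fun e hee => ?_) (hc.transfer _)
    have h3 := c.edges_subset_edgeSet hee
    rw [edgeSet_sup_edge F hxy] at h3
    rcases h3 with rfl | h3
    · exact absurd hee he
    · exact h3

omit [Fintype V] [DecidableEq V] in
lemma reachable_sup_edge {F : SimpleGraph V} {x y a b : V}
    (h : (F ⊔ SimpleGraph.fromEdgeSet {s(x, y)}).Reachable a b) :
    F.Reachable a b ∨ F.Reachable a x ∨ F.Reachable a y := by
  obtain ⟨w⟩ := h
  induction w with
  | nil => exact Or.inl (Reachable.refl _)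
  | cons hadj tail ih =>
    rcases hadj with h1 | h2
    · rcases ih with h3 | h3 | h3
      · exact Or.inl (h1.reachable.trans h3)
      · exact Or.inr (Or.inl (h1.reachable.trans h3))
      · exact Or.inr (Or.inr (h1.reachable.trans h3))
    · rw [SimpleGraph.fromEdgeSet_adj] at h2
      obtain ⟨hmem, -⟩ := h2
      rw [Set.mem_singleton_iff, Sym2.eq_iff] at hmem
      rcases hmem with ⟨rfl, rfl⟩ | ⟨rfl, rfl⟩
      · exact Or.inr (Or.inl (Reachable.refl _))
      · exact Or.inr (Or.inr (Reachable.refl _))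

omit [Fintype V] [DecidableEq V] in
lemma bridge_del {F : SimpleGraph V} (hF : F.IsAcyclic) {x y : V} (hadj : F.Adj x y) :
    ¬ (F.deleteEdges {s(x, y)}).Reachable x y := by
  have := (isAcyclic_iff_forall_adj_isBridge.mp hF) hadj
  rw [isBridge_iff] at this
  exact this

lemma lf_sup_edge {F : SimpleGraph V} (hF : IsLinearForest F) {x y : V}
    (hr : ¬ F.Reachable x y) (hdx : (F.neighborSet x).ncard ≤ 1)
    (hdy : (F.neighborSet y).ncard ≤ 1) :
    IsLinearForest (F ⊔ SimpleGraph.fromEdgeSet {s(x, y)}) ∧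
      (F ⊔ SimpleGraph.fromEdgeSet {s(x, y)}).edgeSet.ncard = F.edgeSet.ncard + 1 := by
  have hxy : x ≠ y := ne_of_not_reachable hr
  refine ⟨⟨acyclic_sup_edge hF.1 hr, ?_⟩, ?_⟩
  · intro z
    by_cases hzx : z = x
    · subst hzx
      rw [nbr_sup_edge_left F hxy]
      exact le_trans (Set.ncard_insert_le _ _) (by omega)
    · by_cases hzy : z = y
      · subst hzy
        rw [sup_edge_comm, nbr_sup_edge_left F hxy.symm]
        exact le_trans (Set.ncard_insert_le _ _) (by omega)
      · rw [nbr_sup_edge_other F hzx hzy]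
        exact hF.2 z
  · rw [edgeSet_sup_edge F hxy]
    exact Set.ncard_insert_of_notMem
      (fun hmem => not_adj_of_not_reachable hr ((SimpleGraph.mem_edgeSet F).mp hmem))
      (Set.toFinite _)

lemma extend_forest {G F : SimpleGraph V} (hle : F ≤ G) (hF : IsLinearForest F) {x y : V}
    (hxy : G.Adj x y) (hr : ¬ F.Reachable x y) (hdx : (F.neighborSet x).ncard ≤ 1)
    (hdy : (F.neighborSet y).ncard ≤ 1) :
    ∃ F₂ : SimpleGraph V, F₂ ≤ G ∧ IsLinearForest F₂ ∧
      F₂.edgeSet.ncard = F.edgeSet.ncard + 1 := by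
  refine ⟨F ⊔ SimpleGraph.fromEdgeSet {s(x, y)}, ?_, (lf_sup_edge hF hr hdx hdy).1,
    (lf_sup_edge hF hr hdx hdy).2⟩
  refine sup_le hle ?_
  intro a b hab
  rw [SimpleGraph.fromEdgeSet_adj] at hab
  obtain ⟨hmem, hne⟩ := hab
  rw [Set.mem_singleton_iff, Sym2.eq_iff] at hmem
  rcases hmem with ⟨rfl, rfl⟩ | ⟨rfl, rfl⟩
  · exact hxy
  · exact hxy.symm

omit [DecidableEq V] in
lemma del_edge_count {F : SimpleGraph V} {x y : V} (hadj : F.Adj x y) :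
    (F.deleteEdges {s(x, y)}).edgeSet.ncard + 1 = F.edgeSet.ncard := by
  rw [edgeSet_deleteEdges]
  exact Set.ncard_diff_singleton_add_one hadj (Set.toFinite _)

end Part2

namespace Part3

open SimpleGraph Set Walk
variable {V : Type*} [Fintype V] [DecidableEq V] {F : SimpleGraph V}

omit [Fintype V] [DecidableEq V] in
lemma isPath_concat {r x y : V} {p : F.Walk r x} (hp : p.IsPath) (h : F.Adj x y)
    (hy : y ∉ p.support) : (p.concat h).IsPath := by
  rw [← Walk.isPath_reverse_iff, Walk.reverse_concat, Walk.cons_isPath_iff]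
  exact ⟨hp.reverse, by simpa [Walk.support_reverse] using hy⟩

omit [Fintype V] in
lemma mem_support_dist {r x y : V} (W : F.Walk r x) (h : y ∈ W.support) :
    F.dist r y + F.dist y x ≤ W.length := by
  have h1 : F.dist r y ≤ (W.takeUntil y h).length := SimpleGraph.dist_le _
  have h2 : F.dist y x ≤ (W.dropUntil y h).length := SimpleGraph.dist_le _
  have h3 : (W.takeUntil y h).length + (W.dropUntil y h).length = W.length := by
    have := congrArg Walk.length (W.take_spec h)
    rwa [Walk.length_append] at this
  omega

omit [Fintype V] in
lemma adj_dist_succ (hF : F.IsAcyclic) {r x y : V} (hr : F.Reachable r x) (ha : F.Adj x y) :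
    F.dist r y = F.dist r x + 1 ∨ F.dist r x = F.dist r y + 1 := by
  have hry : F.Reachable r y := hr.trans ha.reachable
  have h1 : F.dist r y ≤ F.dist r x + 1 := by
    obtain ⟨P, hP, hPl⟩ := hr.exists_path_of_dist
    have := SimpleGraph.dist_le (P.concat ha)
    rwa [Walk.length_concat, hPl] at this
  have h2 : F.dist r x ≤ F.dist r y + 1 := by
    obtain ⟨P, hP, hPl⟩ := hry.exists_path_of_dist
    have := SimpleGraph.dist_le (P.concat ha.symm)
    rwa [Walk.length_concat, hPl] at this
  have hne : F.dist r x ≠ F.dist r y := by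
    intro heq
    obtain ⟨P, hP, hPl⟩ := hr.exists_path_of_dist
    have hy : y ∉ P.support := by
      intro hmem
      have hd := mem_support_dist P hmem
      rw [hPl, ← heq] at hd
      have h0 : F.dist y x = 0 := by omega
      exact ha.ne' ((ha.symm.reachable.dist_eq_zero_iff).mp h0)
    have hQ : (P.concat ha).IsPath := isPath_concat hP ha hy
    obtain ⟨P', hP', hP'l⟩ := hry.exists_path_of_dist
    have hEq : (⟨P.concat ha, hQ⟩ : F.Path r y) = ⟨P', hP'⟩ :=
      isAcyclic_iff_path_unique.mp hF _ _
    have hEq' : P.concat ha = P' := congrArg Subtype.val hEq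
    have hlen : (P.concat ha).length = P'.length := congrArg Walk.length hEq'
    rw [Walk.length_concat, hPl, hP'l, ← heq] at hlen
    omega
  omega

omit [Fintype V] in
lemma pen_unique (hF : F.IsAcyclic) {r y q q' : V} (hq : F.Adj q y) (hq' : F.Adj q' y)
    (hrq : F.Reachable r q) (hrq' : F.Reachable r q')
    (h1 : F.dist r q + 1 = F.dist r y) (h2 : F.dist r q' + 1 = F.dist r y) : q = q' := by
  obtain ⟨P, hP, hPl⟩ := hrq.exists_path_of_dist
  obtain ⟨P', hP', hP'l⟩ := hrq'.exists_path_of_dist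
  have hy : y ∉ P.support := by
    intro hmem
    have hd := mem_support_dist P hmem
    rw [hPl] at hd
    omega
  have hy' : y ∉ P'.support := by
    intro hmem
    have hd := mem_support_dist P' hmem
    rw [hP'l] at hd
    omega
  have hQ : (P.concat hq).IsPath := isPath_concat hP hq hy
  have hQ' : (P'.concat hq').IsPath := isPath_concat hP' hq' hy'
  have hEq : (⟨P.concat hq, hQ⟩ : F.Path r y) = ⟨P'.concat hq', hQ'⟩ :=
    isAcyclic_iff_path_unique.mp hF _ _
  have hEq' : P.concat hq = P'.concat hq' := congrArg Subtype.val hEq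
  obtain ⟨hv, -⟩ := Walk.concat_inj hEq'
  exact hv

lemma exists_leaf (hF : F.IsAcyclic) (x : V) :
    ∃ y, F.Reachable x y ∧ (F.neighborSet y).ncard ≤ 1 := by
  obtain ⟨y, hyS, hymax⟩ := Set.exists_max_image {y | F.Reachable x y} (F.dist x)
    (Set.toFinite _) ⟨x, Reachable.refl x⟩
  refine ⟨y, hyS, ?_⟩
  by_contra hdeg
  push_neg at hdeg
  obtain ⟨a, b, ha, hb, hab⟩ := (Set.one_lt_ncard_iff (Set.toFinite _)).mp hdeg
  rw [SimpleGraph.mem_neighborSet] at ha hb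
  have hxa : F.Reachable x a := hyS.trans ha.reachable
  have hxb : F.Reachable x b := hyS.trans hb.reachable
  have hda : F.dist x a + 1 = F.dist x y := by
    have hle := hymax a hxa
    rcases adj_dist_succ hF hyS ha with h | h
    · omega
    · omega
  have hdb : F.dist x b + 1 = F.dist x y := by
    have hle := hymax b hxb
    rcases adj_dist_succ hF hyS hb with h | h
    · omega
    · omega
  exact hab (pen_unique hF ha.symm hb.symm hxa hxb hda hdb)

end Part3

namespace Part4

open SimpleGraph Set Walk LFAux Part2 Part3
variable {V : Type*} [Fintype V] [DecidableEq V] {F : SimpleGraph V}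

lemma exists_rpc (hF : IsLinearForest F) (u v : V)
    (hdu : (F.neighborSet u).ncard ≤ 1) (hdv : (F.neighborSet v).ncard ≤ 1)
    (hreach : ¬ F.Reachable u v) :
    ∃ root parent child : V → V,
      (∀ x, F.Reachable x (root x)) ∧
      (∀ x, (F.neighborSet (root x)).ncard ≤ 1) ∧
      (∀ x y, F.Reachable x y → root x = root y) ∧
      (∀ x, F.Reachable u x → root x = u) ∧
      (∀ x, F.Reachable v x → root x = v) ∧
      (∀ x, x ≠ root x → F.Adj x (parent x) ∧
        F.dist (root x) (parent x) + 1 = F.dist (root x) x) ∧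
      (∀ x, (F.neighborSet x).ncard = 2 → F.Adj x (child x) ∧ child x ≠ parent x) := by
  classical
  have leafC : ∀ c : F.ConnectedComponent, ∃ y,
      F.connectedComponentMk y = c ∧ (F.neighborSet y).ncard ≤ 1 := by
    intro c
    induction c using SimpleGraph.ConnectedComponent.ind with
    | _ w =>
      obtain ⟨y, hy1, hy2⟩ := exists_leaf hF.1 w
      exact ⟨y, SimpleGraph.ConnectedComponent.sound hy1.symm, hy2⟩
  choose leaf hleaf1 hleaf2 using leafC
  set root : V → V := fun x =>
    if F.Reachable u x then u else if F.Reachable v x then v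
    else leaf (F.connectedComponentMk x) with hrootdef
  have hroot_reach : ∀ x, F.Reachable x (root x) := by
    intro x
    by_cases h1 : F.Reachable u x
    · simp only [hrootdef, if_pos h1]
      exact h1.symm
    · by_cases h2 : F.Reachable v x
      · simp only [hrootdef, if_neg h1, if_pos h2]
        exact h2.symm
      · simp only [hrootdef, if_neg h1, if_neg h2]
        exact (SimpleGraph.ConnectedComponent.eq.mp (hleaf1 (F.connectedComponentMk x))).symm
  have hroot_deg : ∀ x, (F.neighborSet (root x)).ncard ≤ 1 := by
    intro x
    by_cases h1 : F.Reachable u x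
    · simp only [hrootdef, if_pos h1]; exact hdu
    · by_cases h2 : F.Reachable v x
      · simp only [hrootdef, if_neg h1, if_pos h2]; exact hdv
      · simp only [hrootdef, if_neg h1, if_neg h2]
        exact hleaf2 _
  have hroot_congr : ∀ x y, F.Reachable x y → root x = root y := by
    intro x y hxy
    have e1 : F.Reachable u x ↔ F.Reachable u y := ⟨fun h => h.trans hxy, fun h => h.trans hxy.symm⟩
    have e2 : F.Reachable v x ↔ F.Reachable v y := ⟨fun h => h.trans hxy, fun h => h.trans hxy.symm⟩
    have e3 : F.connectedComponentMk x = F.connectedComponentMk y :=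
      SimpleGraph.ConnectedComponent.sound hxy
    by_cases h1 : F.Reachable u x
    · simp only [hrootdef, if_pos h1, if_pos (e1.mp h1)]
    · by_cases h2 : F.Reachable v x
      · simp only [hrootdef, if_neg h1, if_neg (fun h => h1 (e1.mpr h)), if_pos h2,
          if_pos (e2.mp h2)]
      · simp only [hrootdef, if_neg h1, if_neg (fun h => h1 (e1.mpr h)), if_neg h2,
          if_neg (fun h => h2 (e2.mpr h)), e3]
  have hroot_u : ∀ x, F.Reachable u x → root x = u := by
    intro x h1
    simp only [hrootdef, if_pos h1]
  have hroot_v : ∀ x, F.Reachable v x → root x = v := by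
    intro x h2
    have h1 : ¬ F.Reachable u x := fun h => hreach (h.trans h2.symm)
    simp only [hrootdef, if_neg h1, if_pos h2]
  have hpar_ex : ∀ x, x ≠ root x → ∃ p, F.Adj x p ∧
      F.dist (root x) p + 1 = F.dist (root x) x := by
    intro x hx
    have hr : F.Reachable (root x) x := (hroot_reach x).symm
    have hd : 0 < F.dist (root x) x := hr.pos_dist_of_ne (fun h => hx h.symm)
    obtain ⟨P, hP, hPl⟩ := hr.exists_path_of_dist
    have hQl : P.reverse.length = F.dist (root x) x := by rw [Walk.length_reverse, hPl]
    have hQnil : ¬ P.reverse.Nil := by rw [Walk.not_nil_iff_lt_length]; omega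
    refine ⟨P.reverse.getVert 1, P.reverse.adj_snd hQnil, ?_⟩
    have h1 : F.dist (root x) (P.reverse.getVert 1) ≤ P.reverse.length - 1 := by
      have ht := Walk.length_tail_add_one hQnil
      have := SimpleGraph.dist_le P.reverse.tail
      rw [SimpleGraph.dist_comm]
      change F.dist (P.reverse.getVert 1) (root x) ≤ _ at this
      omega
    have h2 : F.dist (root x) x ≤ F.dist (root x) (P.reverse.getVert 1) + 1 := by
      have hrp : F.Reachable (root x) (P.reverse.getVert 1) :=
        hr.trans (P.reverse.adj_snd hQnil).reachable
      obtain ⟨SP, hSP, hSPl⟩ := hrp.exists_path_of_dist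
      have := SimpleGraph.dist_le (SP.concat (P.reverse.adj_snd hQnil).symm)
      rwa [Walk.length_concat, hSPl] at this
    omega
  set parent : V → V := fun x =>
    if h : x ≠ root x then (hpar_ex x h).choose else x with hpardef
  have hpar : ∀ x, x ≠ root x → F.Adj x (parent x) ∧
      F.dist (root x) (parent x) + 1 = F.dist (root x) x := by
    intro x hx
    simp only [hpardef, dif_pos hx]
    exact (hpar_ex x hx).choose_spec
  have hchild_ex : ∀ x, (F.neighborSet x).ncard = 2 →
      ∃ c, F.Adj x c ∧ c ≠ parent x := by
    intro x hx
    have hne : (F.neighborSet x \ {parent x}).Nonempty := by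
      rw [Set.nonempty_iff_ne_empty]
      intro h0
      have hsub : F.neighborSet x ⊆ {parent x} := by
        intro z hz
        by_contra hz2
        exact (Set.eq_empty_iff_forall_notMem.mp h0 z) ⟨hz, hz2⟩
      have := Set.ncard_le_ncard hsub (Set.toFinite _)
      rw [Set.ncard_singleton] at this
      omega
    obtain ⟨c, hc⟩ := hne
    exact ⟨c, hc.1, hc.2⟩
  set child : V → V := fun x =>
    if h : (F.neighborSet x).ncard = 2 then (hchild_ex x h).choose else x with hchilddef
  have hchild : ∀ x, (F.neighborSet x).ncard = 2 →
      F.Adj x (child x) ∧ child x ≠ parent x := by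
    intro x hx
    simp only [hchilddef, dif_pos hx]
    exact (hchild_ex x hx).choose_spec
  exact ⟨root, parent, child, hroot_reach, hroot_deg, hroot_congr, hroot_u, hroot_v, hpar, hchild⟩

end Part4

namespace Part5

open SimpleGraph Set Walk LFAux Part2 Part3 Part4
variable {V : Type*} [Fintype V] [DecidableEq V]

lemma aug (G F : SimpleGraph V) (hFG : F ≤ G) (hF : IsLinearForest F)
    (u v : V) (huv : ¬ G.Adj u v) (hne : u ≠ v)
    (hreach : ¬ F.Reachable u v)
    (hdu : (F.neighborSet u).ncard ≤ 1) (hdv : (F.neighborSet v).ncard ≤ 1)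
    (hdeg : F.edgeSet.ncard + 1 ≤ (G.neighborSet u).ncard + (G.neighborSet v).ncard)
    (hno : ∀ F₂ : SimpleGraph V, F₂ ≤ G → IsLinearForest F₂ →
      F₂.edgeSet.ncard ≠ F.edgeSet.ncard + 1) : False := by
  classical
  obtain ⟨root, parent, child, hroot_reach, hroot_deg, hroot_congr, hroot_u, hroot_v,
    hpar, hchild⟩ := exists_rpc hF u v hdu hdv hreach
  have hedge_le : ∀ x y : V, G.Adj x y → SimpleGraph.fromEdgeSet {s(x, y)} ≤ G := by
    intro x y hxy z w hzw
    rw [SimpleGraph.fromEdgeSet_adj] at hzw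
    obtain ⟨hm, -⟩ := hzw
    rw [Set.mem_singleton_iff, Sym2.eq_iff] at hm
    rcases hm with ⟨rfl, rfl⟩ | ⟨rfl, rfl⟩
    exacts [hxy, hxy.symm]
  have hext : ∀ F₁ : SimpleGraph V, F₁ ≤ G → IsLinearForest F₁ →
      F₁.edgeSet.ncard = F.edgeSet.ncard → ∀ x y : V, G.Adj x y → ¬ F₁.Reachable x y →
      (F₁.neighborSet x).ncard ≤ 1 → (F₁.neighborSet y).ncard ≤ 1 → False := by
    intro F₁ h1 h2 h3 x y h4 h5 h6 h7
    obtain ⟨F₂, hF₂G, hF₂lf, hF₂c⟩ := extend_forest h1 h2 h4 h5 h6 h7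
    exact hno F₂ hF₂G hF₂lf (by rw [hF₂c, h3])
  have hFA : ∀ a, G.Adj u a → (F.neighborSet a).ncard ≤ 1 → F.Reachable u a := by
    intro a ha hd
    by_contra hra
    exact hext F hFG hF rfl u a ha hra hdu hd
  have hFB : ∀ b, G.Adj v b → (F.neighborSet b).ncard ≤ 1 → F.Reachable v b := by
    intro b hb hd
    by_contra hrb
    exact hext F hFG hF rfl v b hb hrb hdv hd
  have hdeg2A : ∀ a, G.Adj u a → F.Reachable v a → (F.neighborSet a).ncard = 2 := by
    intro a ha hva
    have h2 := hF.2 a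
    rcases Nat.lt_or_ge (F.neighborSet a).ncard 2 with h | h
    · exact absurd ((hFA a ha (by omega)).trans hva.symm) hreach
    · omega
  have hdeg2B : ∀ b, G.Adj v b → ¬ F.Reachable v b → (F.neighborSet b).ncard = 2 := by
    intro b hb hvb
    have h2 := hF.2 b
    rcases Nat.lt_or_ge (F.neighborSet b).ncard 2 with h | h
    · exact absurd (hFB b hb (by omega)) hvb
    · omega
  have hA_nonroot : ∀ a, G.Adj u a → a ≠ root a := by
    intro a ha
    by_cases hd : (F.neighborSet a).ncard ≤ 1
    · have hru := hFA a ha hd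
      rw [hroot_u a hru]
      exact fun h => ha.ne h.symm
    · intro h
      have h2 := hroot_deg a
      rw [← h] at h2
      omega
  have hB_nonroot : ∀ b, G.Adj v b → b ≠ root b := by
    intro b hb
    by_cases hd : (F.neighborSet b).ncard ≤ 1
    · have hrv := hFB b hb hd
      rw [hroot_v b hrv]
      exact fun h => hb.ne h.symm
    · intro h
      have h2 := hroot_deg b
      rw [← h] at h2
      omega
  -- the abstract adjacency contradiction
  have hADJ : ∀ x y : V, F.Adj x y → x ≠ root x → y ≠ root y → parent x ≠ y → parent y ≠ x →
      False := by
    intro x y hxy hxr hyr hpx hpy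
    have hrxy : root x = root y := hroot_congr x y hxy.reachable
    obtain ⟨hax, hdx⟩ := hpar x hxr
    obtain ⟨hay, hdy⟩ := hpar y hyr
    have hrx : F.Reachable (root x) x := (hroot_reach x).symm
    have hry : F.Reachable (root x) y := hrx.trans hxy.reachable
    rw [← hrxy] at hdy
    rcases adj_dist_succ hF.1 hrx hxy with h | h
    · have hrpy : F.Reachable (root x) (parent y) := by
        rw [hrxy, hroot_congr y (parent y) hay.reachable]
        exact (hroot_reach (parent y)).symm
      have heq : x = parent y :=
        pen_unique hF.1 hxy hay.symm hrx hrpy (by omega) (by omega)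
      exact hpy heq.symm
    · have hrpx : F.Reachable (root x) (parent x) := by
        rw [hroot_congr x (parent x) hax.reachable]
        exact (hroot_reach (parent x)).symm
      have heq : y = parent x :=
        pen_unique hF.1 hxy.symm hax.symm hry hrpx (by omega) (by omega)
      exact hpx heq.symm
  -- rotation lemma 1
  have hR1 : ∀ a, G.Adj u a → ¬ F.Reachable v a → ¬ G.Adj v (parent a) := by
    intro a hua hva hvp
    have hanr : a ≠ root a := hA_nonroot a hua
    obtain ⟨hap, hdp⟩ := hpar a hanr
    have hpu : parent a ≠ u := by
      intro h; rw [h] at hvp; exact huv hvp.symm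
    have hau : a ≠ u := fun h => hua.ne h.symm
    have hav : a ≠ v := fun h => hva (by rw [h])
    set F0 := F.deleteEdges {s(a, parent a)} with hF0
    have hbr : ¬ F0.Reachable a (parent a) := bridge_del hF.1 hap
    have h0ua : ¬ F0.Reachable u a := by
      by_cases hu : F.Reachable u a
      · have hru : root a = u := hroot_u a hu
        have hrup : F.Reachable u (parent a) := hu.trans hap.reachable
        obtain ⟨P, hP, hPl⟩ := hrup.exists_path_of_dist
        rw [hru] at hdp
        have hae : a ∉ P.support := by
          intro hmem
          have hd := mem_support_dist P hmem
          rw [hPl] at hd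
          omega
        have hr0 : F0.Reachable u (parent a) := by
          refine ⟨P.transfer F0 fun e hee => ?_⟩
          rw [hF0, edgeSet_deleteEdges]
          refine ⟨P.edges_subset_edgeSet hee, ?_⟩
          intro hc2
          rw [Set.mem_singleton_iff] at hc2
          subst hc2
          exact hae (P.fst_mem_support_of_mem_edges hee)
        intro h0
        exact hbr (h0.symm.trans hr0)
      · exact fun h0 => hu (h0.mono (deleteEdges_le _))
    set F1 := F0 ⊔ SimpleGraph.fromEdgeSet {s(u, a)} with hF1
    have hF0lf : IsLinearForest F0 := lf_mono (deleteEdges_le _) hF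
    have hd0u : (F0.neighborSet u).ncard ≤ 1 := by
      rw [hF0, nbr_del_edge_other F hau.symm hpu.symm]
      exact hdu
    have hd0a : (F0.neighborSet a).ncard ≤ 1 := by
      rw [hF0, nbr_del_edge_left]
      have hmem : parent a ∈ F.neighborSet a := hap
      have h3 := Set.ncard_diff_singleton_add_one hmem (Set.toFinite _)
      have h2 := hF.2 a
      omega
    obtain ⟨hF1lf, hF1c⟩ := lf_sup_edge hF0lf h0ua hd0u hd0a
    rw [← hF1] at hF1c
    have hF1G : F1 ≤ G := sup_le ((deleteEdges_le _).trans hFG) (hedge_le u a hua)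
    have hF1count : F1.edgeSet.ncard = F.edgeSet.ncard := by
      have h3 := del_edge_count (F := F) (x := a) (y := parent a) hap
      rw [← hF0] at h3
      omega
    refine hext F1 hF1G hF1lf hF1count v (parent a) hvp ?_ ?_ ?_
    · intro hr1
      rcases reachable_sup_edge hr1 with h | h | h
      · exact hva ((h.mono (deleteEdges_le _)).trans hap.reachable.symm)
      · exact hreach (h.mono (deleteEdges_le _)).symm
      · exact hva (h.mono (deleteEdges_le _))
    · rw [hF1, nbr_sup_edge_other F0 hne.symm hav.symm, hF0,
        nbr_del_edge_other F hav.symm hvp.ne]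
      exact hdv
    · rw [hF1, nbr_sup_edge_other F0 hpu hap.ne', hF0, del_edge_comm,
        nbr_del_edge_left]
      have hmem : a ∈ F.neighborSet (parent a) := hap.symm
      have h3 := Set.ncard_diff_singleton_add_one hmem (Set.toFinite _)
      have h2 := hF.2 (parent a)
      omega
  -- rotation lemma 2
  have hR2 : ∀ a, G.Adj u a → F.Reachable v a → ¬ G.Adj v (child a) := by
    intro a hua hva hvc
    have hd2 : (F.neighborSet a).ncard = 2 := hdeg2A a hua hva
    obtain ⟨hac, hcp⟩ := hchild a hd2
    have hanr : a ≠ root a := hA_nonroot a hua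
    obtain ⟨hap, hdp⟩ := hpar a hanr
    have hra : root a = v := hroot_v a hva
    rw [hra] at hdp
    have hnua : ¬ F.Reachable u a := fun h => hreach (h.trans hva.symm)
    have hnuc : ¬ F.Reachable u (child a) :=
      fun h => hreach ((h.trans hac.reachable.symm).trans hva.symm)
    have hcv : child a ≠ v := fun h => hvc.ne h.symm
    have hcu : child a ≠ u := fun h => hnuc (by rw [h])
    have hau : a ≠ u := fun h => hua.ne h.symm
    have hav : a ≠ v := by
      intro h
      rw [h] at hd2
      omega
    have hdc : F.dist v (child a) = F.dist v a + 1 := by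
      rcases adj_dist_succ hF.1 hva hac with h | h
      · exact h
      · exfalso
        have hrvc : F.Reachable v (child a) := hva.trans hac.reachable
        have hrvp : F.Reachable v (parent a) := hva.trans hap.reachable
        exact hcp (pen_unique hF.1 hac.symm hap.symm hrvc hrvp (by omega) (by omega))
    set F0 := F.deleteEdges {s(a, child a)} with hF0
    have hbr : ¬ F0.Reachable a (child a) := bridge_del hF.1 hac
    have h0ua : ¬ F0.Reachable u a := fun h => hnua (h.mono (deleteEdges_le _))
    set F1 := F0 ⊔ SimpleGraph.fromEdgeSet {s(u, a)} with hF1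
    have hF0lf : IsLinearForest F0 := lf_mono (deleteEdges_le _) hF
    have hd0u : (F0.neighborSet u).ncard ≤ 1 := by
      rw [hF0, nbr_del_edge_other F hau.symm hcu.symm]
      exact hdu
    have hd0a : (F0.neighborSet a).ncard ≤ 1 := by
      rw [hF0, nbr_del_edge_left]
      have hmem : child a ∈ F.neighborSet a := hac
      have h3 := Set.ncard_diff_singleton_add_one hmem (Set.toFinite _)
      omega
    obtain ⟨hF1lf, hF1c⟩ := lf_sup_edge hF0lf h0ua hd0u hd0a
    rw [← hF1] at hF1c
    have hF1G : F1 ≤ G := sup_le ((deleteEdges_le _).trans hFG) (hedge_le u a hua)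
    have hF1count : F1.edgeSet.ncard = F.edgeSet.ncard := by
      have h3 := del_edge_count (F := F) (x := a) (y := child a) hac
      rw [← hF0] at h3
      omega
    have hr0va : F0.Reachable v a := by
      obtain ⟨P, hP, hPl⟩ := hva.exists_path_of_dist
      have hce : child a ∉ P.support := by
        intro hmem
        have hd := mem_support_dist P hmem
        rw [hPl] at hd
        omega
      refine ⟨P.transfer F0 fun e hee => ?_⟩
      rw [hF0, edgeSet_deleteEdges]
      refine ⟨P.edges_subset_edgeSet hee, ?_⟩
      intro hc2
      rw [Set.mem_singleton_iff] at hc2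
      subst hc2
      exact hce (P.snd_mem_support_of_mem_edges hee)
    refine hext F1 hF1G hF1lf hF1count v (child a) hvc ?_ ?_ ?_
    · intro hr1
      rcases reachable_sup_edge hr1.symm with h | h | h
      · exact hbr (h.trans hr0va).symm
      · exact hnuc (h.mono (deleteEdges_le _)).symm
      · exact hbr h.symm
    · rw [hF1, nbr_sup_edge_other F0 hne.symm hav.symm, hF0,
        nbr_del_edge_other F hav.symm hcv.symm]
      exact hdv
    · rw [hF1, nbr_sup_edge_other F0 hcu hac.ne', hF0, del_edge_comm,
        nbr_del_edge_left]
      have hmem : a ∈ F.neighborSet (child a) := hac.symm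
      have h3 := Set.ncard_diff_singleton_add_one hmem (Set.toFinite _)
      have h2 := hF.2 (child a)
      omega
  -- the injections
  set fA : V → Sym2 V := fun a =>
    if F.Reachable v a then s(a, child a) else s(a, parent a) with hfA
  set fB : V → Sym2 V := fun b =>
    if F.Reachable v b then s(b, parent b) else s(b, child b) with hfB
  have hmemA : ∀ a, G.Adj u a → fA a ∈ F.edgeSet := by
    intro a ha
    by_cases hv2 : F.Reachable v a
    · simp only [hfA, if_pos hv2]
      exact (hchild a (hdeg2A a ha hv2)).1
    · simp only [hfA, if_neg hv2]
      exact (hpar a (hA_nonroot a ha)).1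
  have hmemB : ∀ b, G.Adj v b → fB b ∈ F.edgeSet := by
    intro b hb
    by_cases hv2 : F.Reachable v b
    · simp only [hfB, if_pos hv2]
      exact (hpar b (hB_nonroot b hb)).1
    · simp only [hfB, if_neg hv2]
      exact (hchild b (hdeg2B b hb hv2)).1
  have hinjA : ∀ a, G.Adj u a → ∀ a', G.Adj u a' → fA a = fA a' → a = a' := by
    intro a ha a' ha' heq
    by_cases h1 : F.Reachable v a <;> by_cases h2 : F.Reachable v a'
    · simp only [hfA, if_pos h1, if_pos h2, Sym2.eq_iff] at heq
      rcases heq with ⟨rfl, -⟩ | ⟨h3, h4⟩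
      · rfl
      · exfalso
        obtain ⟨hac, hcp⟩ := hchild a (hdeg2A a ha h1)
        obtain ⟨hac', hcp'⟩ := hchild a' (hdeg2A a' ha' h2)
        have hadj : F.Adj a a' := by rw [← h4]; exact hac
        refine hADJ a a' hadj (hA_nonroot a ha) (hA_nonroot a' ha') ?_ ?_
        · rw [← h4]; exact fun h => hcp h.symm
        · rw [h3]; exact fun h => hcp' h.symm
    · exfalso
      simp only [hfA, if_pos h1, if_neg h2, Sym2.eq_iff] at heq
      obtain ⟨hac, -⟩ := hchild a (hdeg2A a ha h1)
      rcases heq with ⟨rfl, -⟩ | ⟨h3, h4⟩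
      · exact h2 h1
      · exact h2 (by rw [← h4]; exact h1.trans hac.reachable)
    · exfalso
      simp only [hfA, if_neg h1, if_pos h2, Sym2.eq_iff] at heq
      obtain ⟨hac', -⟩ := hchild a' (hdeg2A a' ha' h2)
      rcases heq with ⟨rfl, -⟩ | ⟨h3, h4⟩
      · exact h1 h2
      · exact h1 (by rw [h3]; exact h2.trans hac'.reachable)
    · simp only [hfA, if_neg h1, if_neg h2, Sym2.eq_iff] at heq
      rcases heq with ⟨rfl, -⟩ | ⟨h3, h4⟩
      · rfl
      · exfalso
        obtain ⟨hap, hdp⟩ := hpar a (hA_nonroot a ha)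
        obtain ⟨hap', hdp'⟩ := hpar a' (hA_nonroot a' ha')
        have hadj : F.Adj a' a := by rw [h3]; exact hap'
        have hr := hroot_congr a' a hadj.reachable
        rw [← h3] at hdp'
        rw [hr] at hdp'
        rw [h4] at hdp
        omega
  have hinjB : ∀ b, G.Adj v b → ∀ b', G.Adj v b' → fB b = fB b' → b = b' := by
    intro b hb b' hb' heq
    by_cases h1 : F.Reachable v b <;> by_cases h2 : F.Reachable v b'
    · simp only [hfB, if_pos h1, if_pos h2, Sym2.eq_iff] at heq
      rcases heq with ⟨rfl, -⟩ | ⟨h3, h4⟩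
      · rfl
      · exfalso
        obtain ⟨hap, hdp⟩ := hpar b (hB_nonroot b hb)
        obtain ⟨hap', hdp'⟩ := hpar b' (hB_nonroot b' hb')
        have hadj : F.Adj b' b := by rw [h3]; exact hap'
        have hr := hroot_congr b' b hadj.reachable
        rw [← h3] at hdp'
        rw [hr] at hdp'
        rw [h4] at hdp
        omega
    · exfalso
      simp only [hfB, if_pos h1, if_neg h2, Sym2.eq_iff] at heq
      obtain ⟨hap, -⟩ := hpar b (hB_nonroot b hb)
      rcases heq with ⟨rfl, -⟩ | ⟨h3, h4⟩
      · exact h2 h1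
      · exact h2 (by rw [← h4]; exact h1.trans hap.reachable)
    · exfalso
      simp only [hfB, if_neg h1, if_pos h2, Sym2.eq_iff] at heq
      obtain ⟨hap', -⟩ := hpar b' (hB_nonroot b' hb')
      rcases heq with ⟨rfl, -⟩ | ⟨h3, h4⟩
      · exact h1 h2
      · exact h1 (by rw [h3]; exact h2.trans hap'.reachable)
    · simp only [hfB, if_neg h1, if_neg h2, Sym2.eq_iff] at heq
      rcases heq with ⟨rfl, -⟩ | ⟨h3, h4⟩
      · rfl
      · exfalso
        obtain ⟨hbc, hbcp⟩ := hchild b (hdeg2B b hb h1)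
        obtain ⟨hbc', hbcp'⟩ := hchild b' (hdeg2B b' hb' h2)
        have hadj : F.Adj b b' := by rw [← h4]; exact hbc
        refine hADJ b b' hadj (hB_nonroot b hb) (hB_nonroot b' hb') ?_ ?_
        · rw [← h4]; exact fun h => hbcp h.symm
        · rw [h3]; exact fun h => hbcp' h.symm
  have hdisj : ∀ a, G.Adj u a → ∀ b, G.Adj v b → fA a ≠ fB b := by
    intro a ha b hb heq
    by_cases h1 : F.Reachable v a <;> by_cases h2 : F.Reachable v b
    · simp only [hfA, hfB, if_pos h1, if_pos h2, Sym2.eq_iff] at heq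
      obtain ⟨hac, hcp⟩ := hchild a (hdeg2A a ha h1)
      rcases heq with ⟨rfl, h4⟩ | ⟨h3, h4⟩
      · exact hcp h4
      · exact hR2 a ha h1 (by rw [h4]; exact hb)
    · simp only [hfA, hfB, if_pos h1, if_neg h2, Sym2.eq_iff] at heq
      obtain ⟨hac, -⟩ := hchild a (hdeg2A a ha h1)
      rcases heq with ⟨rfl, -⟩ | ⟨h3, h4⟩
      · exact h2 h1
      · exact h2 (by rw [← h4]; exact h1.trans hac.reachable)
    · simp only [hfA, hfB, if_neg h1, if_pos h2, Sym2.eq_iff] at heq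
      obtain ⟨hbp, -⟩ := hpar b (hB_nonroot b hb)
      rcases heq with ⟨rfl, -⟩ | ⟨h3, h4⟩
      · exact h1 h2
      · exact h1 (by rw [h3]; exact h2.trans hbp.reachable)
    · simp only [hfA, hfB, if_neg h1, if_neg h2, Sym2.eq_iff] at heq
      obtain ⟨hap, hdp⟩ := hpar a (hA_nonroot a ha)
      obtain ⟨hbc, hbcp⟩ := hchild b (hdeg2B b hb h2)
      rcases heq with ⟨rfl, h4⟩ | ⟨h3, h4⟩
      · exact hbcp h4.symm
      · exact hR1 a ha h1 (by rw [h4]; exact hb)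
  -- counting
  have hcount : (G.neighborSet u).ncard + (G.neighborSet v).ncard ≤ F.edgeSet.ncard := by
    have hinj : Function.Injective
        (fun x : ↥(G.neighborSet u) ⊕ ↥(G.neighborSet v) =>
          (Sum.elim (fun a : ↥(G.neighborSet u) => (⟨fA a.1, hmemA a.1 a.2⟩ : ↥F.edgeSet))
            (fun b : ↥(G.neighborSet v) => (⟨fB b.1, hmemB b.1 b.2⟩ : ↥F.edgeSet)) x)) := by
      rintro (⟨a, ha⟩ | ⟨b, hb⟩) (⟨a', ha'⟩ | ⟨b', hb'⟩) h
      · simp only [Sum.elim_inl, Subtype.mk.injEq] at h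
        exact congrArg Sum.inl (Subtype.ext (hinjA a ha a' ha' h))
      · simp only [Sum.elim_inl, Sum.elim_inr, Subtype.mk.injEq] at h
        exact absurd h (hdisj a ha b' hb')
      · simp only [Sum.elim_inl, Sum.elim_inr, Subtype.mk.injEq] at h
        exact absurd h.symm (hdisj a' ha' b hb)
      · simp only [Sum.elim_inr, Subtype.mk.injEq] at h
        exact congrArg Sum.inr (Subtype.ext (hinjB b hb b' hb' h))
    have hle := Nat.card_le_card_of_injective _ hinj
    rwa [Nat.card_sum, Nat.card_coe_set_eq, Nat.card_coe_set_eq,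
      Nat.card_coe_set_eq] at hle
  omega

end Part5

/-- A single step of the `k`-closure operation: join two nonadjacent vertices whose
degree sum is at least `k`. -/
inductive ClosureStep {V : Type*} (k : ℕ) : SimpleGraph V → SimpleGraph V → Prop
  | step (G : SimpleGraph V) (u v : V) (hne : u ≠ v) (hadj : ¬ G.Adj u v)
      (hdeg : k ≤ (G.neighborSet u).ncard + (G.neighborSet v).ncard) :
      ClosureStep k G (G ⊔ SimpleGraph.fromEdgeSet {s(u, v)})

/-- `H` is the `k`-closure of `G`: it is obtained from `G` by iteratively joining
nonadjacent vertices with degree sum at least `k`, until no such pair remains. -/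
def IsKClosure {V : Type*} (k : ℕ) (G H : SimpleGraph V) : Prop :=
  Relation.ReflTransGen (ClosureStep k) G H ∧
  ∀ u v : V, u ≠ v → ¬ H.Adj u v →
    (H.neighborSet u).ncard + (H.neighborSet v).ncard < k

namespace Part6

open SimpleGraph Set LFAux Part2 Part5
variable {V : Type*} [Fintype V] [DecidableEq V]

lemma step_back {k : ℕ} {G G' : SimpleGraph V} (hstep : ClosureStep k G G')
    (h : ∃ F : SimpleGraph V, F ≤ G' ∧ IsLinearForest F ∧ F.edgeSet.ncard = k) :
    ∃ F : SimpleGraph V, F ≤ G ∧ IsLinearForest F ∧ F.edgeSet.ncard = k := by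
  cases hstep with
  | step u v hne hadj hdeg =>
    obtain ⟨F, hFle, hFlf, hFc⟩ := h
    by_cases huvF : F.Adj u v
    · set F' := F.deleteEdges {s(u, v)} with hF'
      have hF'le : F' ≤ G := by
        intro x y hxy
        rw [hF', SimpleGraph.deleteEdges_adj] at hxy
        obtain ⟨h1, h2⟩ := hxy
        rcases (SimpleGraph.sup_adj _ _ _ _).mp (hFle h1) with h3 | h3
        · exact h3
        · exfalso
          rw [SimpleGraph.fromEdgeSet_adj] at h3
          exact h2 h3.1
      have hF'lf : IsLinearForest F' := lf_mono (SimpleGraph.deleteEdges_le _) hFlf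
      have hcnt : F'.edgeSet.ncard + 1 = k := by
        rw [← hFc]
        have := del_edge_count (F := F) (x := u) (y := v) huvF
        rw [← hF'] at this
        exact this
      have hd'u : (F'.neighborSet u).ncard ≤ 1 := by
        rw [hF', nbr_del_edge_left]
        have hmem : v ∈ F.neighborSet u := huvF
        have h3 := Set.ncard_diff_singleton_add_one hmem (Set.toFinite _)
        have h2 := hFlf.2 u
        omega
      have hd'v : (F'.neighborSet v).ncard ≤ 1 := by
        rw [hF', del_edge_comm, nbr_del_edge_left]
        have hmem : u ∈ F.neighborSet v := huvF.symm
        have h3 := Set.ncard_diff_singleton_add_one hmem (Set.toFinite _)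
        have h2 := hFlf.2 v
        omega
      have hreach' : ¬ F'.Reachable u v := by
        rw [hF']
        exact bridge_del hFlf.1 huvF
      by_contra hno
      refine Part5.aug G F' hF'le hF'lf u v hadj hne hreach' hd'u hd'v (by omega) ?_
      intro F₂ h1 h2 h3
      exact hno ⟨F₂, h1, h2, by rw [h3, hcnt]⟩
    · refine ⟨F, ?_, hFlf, hFc⟩
      intro x y hxy
      rcases (SimpleGraph.sup_adj _ _ _ _).mp (hFle hxy) with h3 | h3
      · exact h3
      · exfalso
        rw [SimpleGraph.fromEdgeSet_adj] at h3
        obtain ⟨hm, -⟩ := h3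
        rw [Set.mem_singleton_iff, Sym2.eq_iff] at hm
        rcases hm with ⟨rfl, rfl⟩ | ⟨rfl, rfl⟩
        · exact huvF hxy
        · exact huvF hxy.symm

end Part6

theorem stmt_7 (n k : ℕ) (G H : SimpleGraph (Fin n)) (hH : IsKClosure k G H) :
    (¬ ∃ F : SimpleGraph (Fin n), F ≤ G ∧ IsLinearForest F ∧ F.edgeSet.ncard = k) ↔
    (¬ ∃ F : SimpleGraph (Fin n), F ≤ H ∧ IsLinearForest F ∧ F.edgeSet.ncard = k) := by
  obtain ⟨hrt, -⟩ := hH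
  have key : (∃ F : SimpleGraph (Fin n), F ≤ H ∧ IsLinearForest F ∧ F.edgeSet.ncard = k) →
      ∃ F : SimpleGraph (Fin n), F ≤ G ∧ IsLinearForest F ∧ F.edgeSet.ncard = k := by
    intro hex
    induction hrt using Relation.ReflTransGen.head_induction_on with
    | refl => exact hex
    | head hstep _ ih => exact Part6.step_back hstep ih
  have hle : G ≤ H := by
    clear key
    induction hrt with
    | refl => exact le_refl _
    | tail _ hstep ih =>
      refine ih.trans ?_
      cases hstep with
      | step u v hne hadj hdeg => exact le_sup_left
  constructor
  · intro hG hexH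
    exact hG (key hexH)
  · intro hH2 hexG
    obtain ⟨F, h1, h2, h3⟩ := hexG
    exact hH2 ⟨F, h1.trans hle, h2, h3⟩
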